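/- Let A be a matrix in the SO(6)-conjugation orbit of J₀ (an orthogonal almost complex structure compatible with the standard orientation). Then A commutes with every torus element R(θ₁)⊕R(θ₂)⊕R(θ₃) if and only if A = ε₁E₁₂ + ε₂E₃₄ + ε₃E₅₆ for signs ε₁, ε₂, ε₃ ∈ {−1,1} with ε₁ε₂ε₃ = 1. In particular the fixed points of the maximal torus on this orbit are exactly the four matrices projecting to the vertices (1,1,1), (1,−1,−1), (−1,1,−1), (−1,−1,1) of the moment tetrahedron. -/

import Mathlib

open Matrix

noncomputable section

/-- The skew-symmetric matrix of the 2-form `eⁱ ∧ eʲ`. -/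
def E (i j : Fin 6) : Matrix (Fin 6) (Fin 6) ℝ := fun k l =>
  (if k = j ∧ l = i then (1 : ℝ) else 0) - (if k = i ∧ l = j then (1 : ℝ) else 0)

/-- The standard orthogonal complex structure `J₀ = E₁₂ + E₃₄ + E₅₆`. -/
def J₀ : Matrix (Fin 6) (Fin 6) ℝ := E 0 1 + E 2 3 + E 4 5

/-- The element `R(θ₁) ⊕ R(θ₂) ⊕ R(θ₃)` of the maximal torus `T³ ⊂ SO(6)`. -/
def T3 (θ₁ θ₂ θ₃ : ℝ) : Matrix (Fin 6) (Fin 6) ℝ :=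
  !![Real.cos θ₁, -Real.sin θ₁, 0, 0, 0, 0;
     Real.sin θ₁,  Real.cos θ₁, 0, 0, 0, 0;
     0, 0, Real.cos θ₂, -Real.sin θ₂, 0, 0;
     0, 0, Real.sin θ₂,  Real.cos θ₂, 0, 0;
     0, 0, 0, 0, Real.cos θ₃, -Real.sin θ₃;
     0, 0, 0, 0, Real.sin θ₃,  Real.cos θ₃]

section VecEval
variable {α : Type*}
@[simp] lemma consv1_1 (x : α) (u : Fin 1 → α) : vecCons x u 1 = u 0 := rfl
@[simp] lemma consv2_1 (x : α) (u : Fin 2 → α) : vecCons x u 1 = u 0 := rfl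
@[simp] lemma consv2_2 (x : α) (u : Fin 2 → α) : vecCons x u 2 = u 1 := rfl
@[simp] lemma consv3_1 (x : α) (u : Fin 3 → α) : vecCons x u 1 = u 0 := rfl
@[simp] lemma consv3_2 (x : α) (u : Fin 3 → α) : vecCons x u 2 = u 1 := rfl
@[simp] lemma consv3_3 (x : α) (u : Fin 3 → α) : vecCons x u 3 = u 2 := rfl
@[simp] lemma consv4_1 (x : α) (u : Fin 4 → α) : vecCons x u 1 = u 0 := rfl
@[simp] lemma consv4_2 (x : α) (u : Fin 4 → α) : vecCons x u 2 = u 1 := rfl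
@[simp] lemma consv4_3 (x : α) (u : Fin 4 → α) : vecCons x u 3 = u 2 := rfl
@[simp] lemma consv4_4 (x : α) (u : Fin 4 → α) : vecCons x u 4 = u 3 := rfl
@[simp] lemma consv5_1 (x : α) (u : Fin 5 → α) : vecCons x u 1 = u 0 := rfl
@[simp] lemma consv5_2 (x : α) (u : Fin 5 → α) : vecCons x u 2 = u 1 := rfl
@[simp] lemma consv5_3 (x : α) (u : Fin 5 → α) : vecCons x u 3 = u 2 := rfl
@[simp] lemma consv5_4 (x : α) (u : Fin 5 → α) : vecCons x u 4 = u 3 := rfl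
@[simp] lemma consv5_5 (x : α) (u : Fin 5 → α) : vecCons x u 5 = u 4 := rfl
@[simp] lemma vecHead_const {n : ℕ} (c : α) : vecHead (fun _ : Fin (n+1) => c) = c := rfl
@[simp] lemma vecTail_const {n : ℕ} (c : α) : vecTail (fun _ : Fin (n+1) => c) = (fun _ : Fin n => c) := rfl
end VecEval

lemma J0_sq : J₀ * J₀ = -1 := by
  ext i j
  fin_cases i <;> fin_cases j <;>
    simp +decide [J₀, E, Matrix.mul_apply, Matrix.add_apply, Matrix.neg_apply, Matrix.one_apply,
      Fin.sum_univ_six]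

lemma J0_transpose : J₀ᵀ = -J₀ := by
  ext i j
  fin_cases i <;> fin_cases j <;>
    simp +decide [J₀, E, Matrix.transpose_apply, Matrix.add_apply, Matrix.neg_apply]

lemma det_blocks_nonneg (X Y : Matrix (Fin 3) (Fin 3) ℝ) :
    0 ≤ (fromBlocks X (-Y) Y X).det := by
  set f : ℝ →+* ℂ := Complex.ofRealHom with hf
  set Xc := X.map f with hXc
  set Yc := Y.map f with hYc
  have hmap : (fromBlocks X (-Y) Y X).map f = fromBlocks Xc (-Yc) Yc Xc := by
    ext i j
    rcases i with i | i <;> rcases j with j | j <;>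
      simp [Matrix.map_apply, Matrix.fromBlocks_apply₁₁, Matrix.fromBlocks_apply₁₂,
        Matrix.fromBlocks_apply₂₁, Matrix.fromBlocks_apply₂₂, Matrix.neg_apply, hXc, hYc, hf]
  set L : Matrix (Fin 3 ⊕ Fin 3) (Fin 3 ⊕ Fin 3) ℂ := fromBlocks 1 (Complex.I • 1) 0 1 with hLdef
  set R : Matrix (Fin 3 ⊕ Fin 3) (Fin 3 ⊕ Fin 3) ℂ := fromBlocks 1 (-(Complex.I) • 1) 0 1 with hRdef
  have hL : L.det = 1 := by
    simp [hLdef, Matrix.det_fromBlocks_zero₂₁]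
  have hR : R.det = 1 := by
    simp [hRdef, Matrix.det_fromBlocks_zero₂₁]
  set Z := Xc + Complex.I • Yc with hZ
  set W := Xc - Complex.I • Yc with hW
  have hprod : L * fromBlocks Xc (-Yc) Yc Xc * R = fromBlocks Z 0 Yc W := by
    rw [hLdef, hRdef, Matrix.fromBlocks_multiply, Matrix.fromBlocks_multiply]
    ext i j
    rcases i with i | i <;> rcases j with j | j <;>
      simp [Matrix.fromBlocks_apply₁₁, Matrix.fromBlocks_apply₁₂,
        Matrix.fromBlocks_apply₂₁, Matrix.fromBlocks_apply₂₂, Matrix.smul_mul, Matrix.mul_smul,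
        Matrix.add_apply, Matrix.sub_apply, Matrix.neg_apply, Matrix.smul_apply, smul_eq_mul,
        hZ, hW] <;> ring_nf <;> simp [Complex.I_sq] <;> ring
  have hdetC : f (fromBlocks X (-Y) Y X).det = Z.det * W.det := by
    rw [RingHom.map_det, RingHom.mapMatrix_apply, hmap]
    have hd : (fromBlocks Xc (-Yc) Yc Xc).det = (L * fromBlocks Xc (-Yc) Yc Xc * R).det := by
      rw [Matrix.det_mul, Matrix.det_mul, hL, hR, one_mul, mul_one]
    rw [hd, hprod, Matrix.det_fromBlocks_zero₁₂]
  have hWZ : W.det = (starRingEnd ℂ) Z.det := by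
    rw [RingHom.map_det, RingHom.mapMatrix_apply]
    congr 1
    ext i j
    simp [hZ, hW, hXc, hYc, hf, Matrix.sub_apply, Matrix.add_apply, Matrix.smul_apply,
      Matrix.map_apply, sub_eq_add_neg]
  have hfin : f (fromBlocks X (-Y) Y X).det = (Complex.normSq Z.det : ℂ) := by
    rw [hdetC, hWZ, Complex.mul_conj]
  rw [hf] at hfin
  simp only [Complex.ofRealHom_eq_coe] at hfin
  have h2 : (fromBlocks X (-Y) Y X).det = Complex.normSq Z.det := by
    exact_mod_cast hfin
  rw [h2]
  exact Complex.normSq_nonneg _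

/-- The shuffle equivalence `Fin 6 ≃ Fin 3 ⊕ Fin 3` (evens left, odds right). -/
def sh : Fin 6 ≃ Fin 3 ⊕ Fin 3 where
  toFun := ![Sum.inl 0, Sum.inr 0, Sum.inl 1, Sum.inr 1, Sum.inl 2, Sum.inr 2]
  invFun := Sum.elim ![0, 2, 4] ![1, 3, 5]
  left_inv := by decide
  right_inv := by decide

/-- A real matrix commuting with `J₀` has nonnegative determinant. -/
lemma det_nonneg_of_comm (M : Matrix (Fin 6) (Fin 6) ℝ) (h : M * J₀ = J₀ * M) :
    0 ≤ M.det := by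
  have r01 : M 0 1 = -(M 1 0) := by
    have := congrFun (congrFun h 0) 0
    simp +decide [J₀, E, Matrix.mul_apply, Fin.sum_univ_six, Matrix.add_apply] at this
    linarith
  have r11 : M 1 1 = M 0 0 := by
    have := congrFun (congrFun h 1) 0
    simp +decide [J₀, E, Matrix.mul_apply, Fin.sum_univ_six, Matrix.add_apply] at this
    linarith
  have r21 : M 2 1 = -(M 3 0) := by
    have := congrFun (congrFun h 2) 0
    simp +decide [J₀, E, Matrix.mul_apply, Fin.sum_univ_six, Matrix.add_apply] at this
    linarith
  have r31 : M 3 1 = M 2 0 := by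
    have := congrFun (congrFun h 3) 0
    simp +decide [J₀, E, Matrix.mul_apply, Fin.sum_univ_six, Matrix.add_apply] at this
    linarith
  have r41 : M 4 1 = -(M 5 0) := by
    have := congrFun (congrFun h 4) 0
    simp +decide [J₀, E, Matrix.mul_apply, Fin.sum_univ_six, Matrix.add_apply] at this
    linarith
  have r51 : M 5 1 = M 4 0 := by
    have := congrFun (congrFun h 5) 0
    simp +decide [J₀, E, Matrix.mul_apply, Fin.sum_univ_six, Matrix.add_apply] at this
    linarith
  have r03 : M 0 3 = -(M 1 2) := by
    have := congrFun (congrFun h 0) 2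
    simp +decide [J₀, E, Matrix.mul_apply, Fin.sum_univ_six, Matrix.add_apply] at this
    linarith
  have r13 : M 1 3 = M 0 2 := by
    have := congrFun (congrFun h 1) 2
    simp +decide [J₀, E, Matrix.mul_apply, Fin.sum_univ_six, Matrix.add_apply] at this
    linarith
  have r23 : M 2 3 = -(M 3 2) := by
    have := congrFun (congrFun h 2) 2
    simp +decide [J₀, E, Matrix.mul_apply, Fin.sum_univ_six, Matrix.add_apply] at this
    linarith
  have r33 : M 3 3 = M 2 2 := by
    have := congrFun (congrFun h 3) 2
    simp +decide [J₀, E, Matrix.mul_apply, Fin.sum_univ_six, Matrix.add_apply] at this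
    linarith
  have r43 : M 4 3 = -(M 5 2) := by
    have := congrFun (congrFun h 4) 2
    simp +decide [J₀, E, Matrix.mul_apply, Fin.sum_univ_six, Matrix.add_apply] at this
    linarith
  have r53 : M 5 3 = M 4 2 := by
    have := congrFun (congrFun h 5) 2
    simp +decide [J₀, E, Matrix.mul_apply, Fin.sum_univ_six, Matrix.add_apply] at this
    linarith
  have r05 : M 0 5 = -(M 1 4) := by
    have := congrFun (congrFun h 0) 4
    simp +decide [J₀, E, Matrix.mul_apply, Fin.sum_univ_six, Matrix.add_apply] at this
    linarith
  have r15 : M 1 5 = M 0 4 := by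
    have := congrFun (congrFun h 1) 4
    simp +decide [J₀, E, Matrix.mul_apply, Fin.sum_univ_six, Matrix.add_apply] at this
    linarith
  have r25 : M 2 5 = -(M 3 4) := by
    have := congrFun (congrFun h 2) 4
    simp +decide [J₀, E, Matrix.mul_apply, Fin.sum_univ_six, Matrix.add_apply] at this
    linarith
  have r35 : M 3 5 = M 2 4 := by
    have := congrFun (congrFun h 3) 4
    simp +decide [J₀, E, Matrix.mul_apply, Fin.sum_univ_six, Matrix.add_apply] at this
    linarith
  have r45 : M 4 5 = -(M 5 4) := by
    have := congrFun (congrFun h 4) 4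
    simp +decide [J₀, E, Matrix.mul_apply, Fin.sum_univ_six, Matrix.add_apply] at this
    linarith
  have r55 : M 5 5 = M 4 4 := by
    have := congrFun (congrFun h 5) 4
    simp +decide [J₀, E, Matrix.mul_apply, Fin.sum_univ_six, Matrix.add_apply] at this
    linarith
  set X : Matrix (Fin 3) (Fin 3) ℝ :=
    !![M 0 0, M 0 2, M 0 4; M 2 0, M 2 2, M 2 4; M 4 0, M 4 2, M 4 4] with hX
  set Y : Matrix (Fin 3) (Fin 3) ℝ :=
    !![M 1 0, M 1 2, M 1 4; M 3 0, M 3 2, M 3 4; M 5 0, M 5 2, M 5 4] with hY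
  have hM : M = (fromBlocks X (-Y) Y X).submatrix sh sh := by
    ext i j
    fin_cases i <;> fin_cases j <;>
      simp +decide [sh, Matrix.submatrix_apply, Matrix.fromBlocks_apply₁₁,
        Matrix.fromBlocks_apply₁₂, Matrix.fromBlocks_apply₂₁, Matrix.fromBlocks_apply₂₂,
        Matrix.neg_apply, hX, hY] <;>
      linarith [r01, r11, r21, r31, r41, r51, r03, r13, r23, r33, r43, r53, r05, r15, r25, r35, r45, r55]
  rw [hM, Matrix.det_submatrix_equiv_self]
  exact det_blocks_nonneg X Y

set_option maxHeartbeats 0 in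
theorem torus_fixed_points_acs (A : Matrix (Fin 6) (Fin 6) ℝ)
    (hA : ∃ P : Matrix (Fin 6) (Fin 6) ℝ, P * Pᵀ = 1 ∧ P.det = 1 ∧ A = P * J₀ * Pᵀ) :
    (∀ θ₁ θ₂ θ₃ : ℝ, A * T3 θ₁ θ₂ θ₃ = T3 θ₁ θ₂ θ₃ * A) ↔
      ∃ ε₁ ε₂ ε₃ : ℝ, (ε₁ = 1 ∨ ε₁ = -1) ∧ (ε₂ = 1 ∨ ε₂ = -1) ∧ (ε₃ = 1 ∨ ε₃ = -1) ∧
        ε₁ * ε₂ * ε₃ = 1 ∧ A = ε₁ • E 0 1 + ε₂ • E 2 3 + ε₃ • E 4 5 := by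
  obtain ⟨P, hP1, hPdet, hAeq⟩ := hA
  have hPtP : Pᵀ * P = 1 := mul_eq_one_comm.mp hP1
  have hAA : A * A = -1 := by
    have h1 : A * A = P * (J₀ * ((Pᵀ * P) * (J₀ * Pᵀ))) := by
      rw [hAeq]; simp only [Matrix.mul_assoc]
    rw [h1, hPtP, Matrix.one_mul, ← Matrix.mul_assoc J₀ J₀ Pᵀ, J0_sq, Matrix.neg_mul,
      Matrix.one_mul, Matrix.mul_neg, hP1]
  have hskew : Aᵀ = -A := by
    rw [hAeq]
    simp [Matrix.transpose_mul, J0_transpose, Matrix.mul_assoc]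
  constructor
  · intro h
    have hD1 : A * !![(-1:ℝ),0,0,0,0,0; 0,-1,0,0,0,0; 0,0,1,0,0,0; 0,0,0,1,0,0; 0,0,0,0,1,0;
        0,0,0,0,0,1] = !![(-1:ℝ),0,0,0,0,0; 0,-1,0,0,0,0; 0,0,1,0,0,0; 0,0,0,1,0,0;
        0,0,0,0,1,0; 0,0,0,0,0,1] * A := by
      have := h Real.pi 0 0
      simpa [T3, Real.cos_pi, Real.sin_pi] using this
    have hD2 : A * !![(1:ℝ),0,0,0,0,0; 0,1,0,0,0,0; 0,0,-1,0,0,0; 0,0,0,-1,0,0; 0,0,0,0,1,0;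
        0,0,0,0,0,1] = !![(1:ℝ),0,0,0,0,0; 0,1,0,0,0,0; 0,0,-1,0,0,0; 0,0,0,-1,0,0;
        0,0,0,0,1,0; 0,0,0,0,0,1] * A := by
      have := h 0 Real.pi 0
      simpa [T3, Real.cos_pi, Real.sin_pi] using this
    have sk : ∀ i j : Fin 6, A j i = -(A i j) := by
      intro i j
      have := congrFun (congrFun hskew i) j
      simpa [Matrix.transpose_apply, Matrix.neg_apply] using this
    have z02 : A 0 2 = 0 := by
      have := congrFun (congrFun hD1 0) 2
      simp [Matrix.mul_apply, Fin.sum_univ_six] at this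
      linarith
    have z03 : A 0 3 = 0 := by
      have := congrFun (congrFun hD1 0) 3
      simp [Matrix.mul_apply, Fin.sum_univ_six] at this
      linarith
    have z04 : A 0 4 = 0 := by
      have := congrFun (congrFun hD1 0) 4
      simp [Matrix.mul_apply, Fin.sum_univ_six] at this
      linarith
    have z05 : A 0 5 = 0 := by
      have := congrFun (congrFun hD1 0) 5
      simp [Matrix.mul_apply, Fin.sum_univ_six] at this
      linarith
    have z12 : A 1 2 = 0 := by
      have := congrFun (congrFun hD1 1) 2
      simp [Matrix.mul_apply, Fin.sum_univ_six] at this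
      linarith
    have z13 : A 1 3 = 0 := by
      have := congrFun (congrFun hD1 1) 3
      simp [Matrix.mul_apply, Fin.sum_univ_six] at this
      linarith
    have z14 : A 1 4 = 0 := by
      have := congrFun (congrFun hD1 1) 4
      simp [Matrix.mul_apply, Fin.sum_univ_six] at this
      linarith
    have z15 : A 1 5 = 0 := by
      have := congrFun (congrFun hD1 1) 5
      simp [Matrix.mul_apply, Fin.sum_univ_six] at this
      linarith
    have z20 : A 2 0 = 0 := by
      have := congrFun (congrFun hD1 2) 0
      simp [Matrix.mul_apply, Fin.sum_univ_six] at this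
      linarith
    have z21 : A 2 1 = 0 := by
      have := congrFun (congrFun hD1 2) 1
      simp [Matrix.mul_apply, Fin.sum_univ_six] at this
      linarith
    have z24 : A 2 4 = 0 := by
      have := congrFun (congrFun hD2 2) 4
      simp [Matrix.mul_apply, Fin.sum_univ_six] at this
      linarith
    have z25 : A 2 5 = 0 := by
      have := congrFun (congrFun hD2 2) 5
      simp [Matrix.mul_apply, Fin.sum_univ_six] at this
      linarith
    have z30 : A 3 0 = 0 := by
      have := congrFun (congrFun hD1 3) 0
      simp [Matrix.mul_apply, Fin.sum_univ_six] at this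
      linarith
    have z31 : A 3 1 = 0 := by
      have := congrFun (congrFun hD1 3) 1
      simp [Matrix.mul_apply, Fin.sum_univ_six] at this
      linarith
    have z34 : A 3 4 = 0 := by
      have := congrFun (congrFun hD2 3) 4
      simp [Matrix.mul_apply, Fin.sum_univ_six] at this
      linarith
    have z35 : A 3 5 = 0 := by
      have := congrFun (congrFun hD2 3) 5
      simp [Matrix.mul_apply, Fin.sum_univ_six] at this
      linarith
    have z40 : A 4 0 = 0 := by
      have := congrFun (congrFun hD1 4) 0
      simp [Matrix.mul_apply, Fin.sum_univ_six] at this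
      linarith
    have z41 : A 4 1 = 0 := by
      have := congrFun (congrFun hD1 4) 1
      simp [Matrix.mul_apply, Fin.sum_univ_six] at this
      linarith
    have z42 : A 4 2 = 0 := by
      have := congrFun (congrFun hD2 4) 2
      simp [Matrix.mul_apply, Fin.sum_univ_six] at this
      linarith
    have z43 : A 4 3 = 0 := by
      have := congrFun (congrFun hD2 4) 3
      simp [Matrix.mul_apply, Fin.sum_univ_six] at this
      linarith
    have z50 : A 5 0 = 0 := by
      have := congrFun (congrFun hD1 5) 0
      simp [Matrix.mul_apply, Fin.sum_univ_six] at this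
      linarith
    have z51 : A 5 1 = 0 := by
      have := congrFun (congrFun hD1 5) 1
      simp [Matrix.mul_apply, Fin.sum_univ_six] at this
      linarith
    have z52 : A 5 2 = 0 := by
      have := congrFun (congrFun hD2 5) 2
      simp [Matrix.mul_apply, Fin.sum_univ_six] at this
      linarith
    have z53 : A 5 3 = 0 := by
      have := congrFun (congrFun hD2 5) 3
      simp [Matrix.mul_apply, Fin.sum_univ_six] at this
      linarith
    obtain ⟨ε₁, hd1⟩ : ∃ x : ℝ, x = A 1 0 := ⟨A 1 0, rfl⟩
    obtain ⟨ε₂, hd2⟩ : ∃ x : ℝ, x = A 3 2 := ⟨A 3 2, rfl⟩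
    obtain ⟨ε₃, hd3⟩ : ∃ x : ℝ, x = A 5 4 := ⟨A 5 4, rfl⟩
    have hform : A = ε₁ • E 0 1 + ε₂ • E 2 3 + ε₃ • E 4 5 := by
      rw [hd1, hd2, hd3]
      ext i j
      fin_cases i <;> fin_cases j <;>
        simp +decide [E, Matrix.add_apply, Matrix.smul_apply, smul_eq_mul] <;>
        linarith [z02, z03, z04, z05, z12, z13, z14, z15, z20, z21, z24, z25, z30, z31, z34, z35, z40, z41, z42, z43, z50, z51, z52, z53, sk 0 0, sk 1 1, sk 2 2, sk 3 3, sk 4 4, sk 5 5, sk 1 0, sk 3 2, sk 5 4]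
    have e1 : ε₁ * ε₁ = 1 := by
      have := congrFun (congrFun hAA 0) 0
      rw [hform] at this
      simp +decide [E, Matrix.mul_apply, Fin.sum_univ_six, Matrix.add_apply, Matrix.smul_apply,
        smul_eq_mul, Matrix.neg_apply, Matrix.one_apply] at this
      nlinarith [this]
    have e2 : ε₂ * ε₂ = 1 := by
      have := congrFun (congrFun hAA 2) 2
      rw [hform] at this
      simp +decide [E, Matrix.mul_apply, Fin.sum_univ_six, Matrix.add_apply, Matrix.smul_apply,
        smul_eq_mul, Matrix.neg_apply, Matrix.one_apply] at this
      nlinarith [this]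
    have e3 : ε₃ * ε₃ = 1 := by
      have := congrFun (congrFun hAA 4) 4
      rw [hform] at this
      simp +decide [E, Matrix.mul_apply, Fin.sum_univ_six, Matrix.add_apply, Matrix.smul_apply,
        smul_eq_mul, Matrix.neg_apply, Matrix.one_apply] at this
      nlinarith [this]
    have hε1 : ε₁ = 1 ∨ ε₁ = -1 := mul_self_eq_one_iff.mp e1
    have hε2 : ε₂ = 1 ∨ ε₂ = -1 := mul_self_eq_one_iff.mp e2
    have hε3 : ε₃ = 1 ∨ ε₃ = -1 := mul_self_eq_one_iff.mp e3
    set S : Matrix (Fin 6) (Fin 6) ℝ := Matrix.diagonal ![1, ε₁, 1, ε₂, 1, ε₃] with hSdef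
    have hSt : Sᵀ = S := Matrix.diagonal_transpose _
    have hSS : S * S = 1 := by
      rw [hSdef, Matrix.diagonal_mul_diagonal]
      ext i j
      rcases eq_or_ne i j with rfl | hne
      · rw [Matrix.diagonal_apply_eq, Matrix.one_apply_eq]
        fin_cases i <;> simp <;> nlinarith [e1, e2, e3]
      · rw [Matrix.diagonal_apply_ne _ hne, Matrix.one_apply_ne hne]
    have hSA : S * A = J₀ * S := by
      rw [hform, hSdef]
      ext i j
      fin_cases i <;> fin_cases j <;>
        simp +decide [Matrix.diagonal_mul, Matrix.mul_diagonal, E, J₀,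
          Matrix.add_apply, Matrix.smul_apply, smul_eq_mul] <;>
        nlinarith [e1, e2, e3]
    have hSAS : S * A * S = J₀ := by
      rw [hSA, Matrix.mul_assoc, hSS, Matrix.mul_one]
    have hMo : (S * P) * (S * P)ᵀ = 1 := by
      have h2 : (S * P) * (S * P)ᵀ = S * (P * Pᵀ) * Sᵀ := by
        rw [Matrix.transpose_mul]; simp only [Matrix.mul_assoc]
      rw [h2, hP1, Matrix.mul_one, hSt, hSS]
    have hMtM : (S * P)ᵀ * (S * P) = 1 := mul_eq_one_comm.mp hMo
    have hMJM : (S * P) * J₀ * (S * P)ᵀ = J₀ := by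
      have h2 : (S * P) * J₀ * (S * P)ᵀ = S * (P * J₀ * Pᵀ) * S := by
        rw [Matrix.transpose_mul, hSt]; simp only [Matrix.mul_assoc]
      rw [h2, ← hAeq, hSAS]
    have hcomm : (S * P) * J₀ = J₀ * (S * P) := by
      calc (S * P) * J₀ = (S * P) * J₀ * ((S * P)ᵀ * (S * P)) := by
            rw [hMtM, Matrix.mul_one]
        _ = ((S * P) * J₀ * (S * P)ᵀ) * (S * P) := by simp only [Matrix.mul_assoc]
        _ = J₀ * (S * P) := by rw [hMJM]
    have hdet : (S * P).det = ε₁ * ε₂ * ε₃ := by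
      rw [Matrix.det_mul, hPdet, mul_one, hSdef, Matrix.det_diagonal, Fin.prod_univ_six]
      simp
    have h0 : (0:ℝ) ≤ ε₁ * ε₂ * ε₃ := by
      rw [← hdet]
      exact det_nonneg_of_comm _ hcomm
    have hprod : ε₁ * ε₂ * ε₃ = 1 := by
      rcases hε1 with h1 | h1 <;> rcases hε2 with h2 | h2 <;> rcases hε3 with h3 | h3 <;>
        rw [h1, h2, h3] at h0 ⊢ <;> linarith
    exact ⟨ε₁, ε₂, ε₃, hε1, hε2, hε3, hprod, hform⟩
  · rintro ⟨ε₁, ε₂, ε₃, -, -, -, -, hAe⟩ θ₁ θ₂ θ₃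
    rw [hAe]
    ext i j
    fin_cases i <;> fin_cases j <;>
      simp +decide [T3, E, Matrix.mul_apply, Fin.sum_univ_six, Matrix.add_apply,
        Matrix.smul_apply, smul_eq_mul] <;> ring
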